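/- Let F : ℝ → ℝ with F(u) = u^{2+ε}h(u) + au² + b for u > 0, where h is nondecreasing on (0,∞), ε > 0, b ≥ 0, 0 < a < λ₁/2, and suppose f = F' satisfies u f(u) ≥ λ u² for u > 0 with λ > λ₁ > 0. Then there exist m > 1 and μ > 0 such that u f(u) ≥ μ u^{2+ε} for all u ≥ m. -/

import Mathlib

theorem stmt_15 (f F : ℝ → ℝ) (h : ℝ → ℝ) (ε a b lam lam1 : ℝ)
    (hε : 0 < ε) (hlam1 : 0 < lam1) (hlam : lam1 < lam)
    (ha0 : 0 < a) (ha : a < lam1 / 2) (hb : 0 ≤ b)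
    (hmono : ∀ u v : ℝ, 0 < u → u ≤ v → h u ≤ h v)
    (hFrep : ∀ u : ℝ, 0 < u → F u = u ^ (2 + ε) * h u + a * u ^ 2 + b)
    (hf : ∀ u : ℝ, 0 < u → HasDerivAt F (f u) u)
    (hlow : ∀ u : ℝ, 0 < u → lam * u ^ 2 ≤ u * f u) :
    ∃ m : ℝ, 1 < m ∧ ∃ μ : ℝ, 0 < μ ∧ ∀ u : ℝ, m ≤ u → μ * u ^ (2 + ε) ≤ u * f u := by
  have hlam2 : a < lam / 2 := lt_of_lt_of_le ha (by linarith)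
  -- Step 1: there exists u₀ > 1 with h u₀ > 0
  have key : ∃ u₀ : ℝ, 1 < u₀ ∧ 0 < h u₀ := by
    by_contra hcon
    push_neg at hcon
    -- φ = F - lam/2 * u^2 is monotone on [1, ∞)
    set φ : ℝ → ℝ := fun u => F u - lam / 2 * u ^ 2 with hφdef
    have hφd : ∀ u : ℝ, 0 < u → HasDerivAt φ (f u - lam * u) u := by
      intro u hu
      have h2 : HasDerivAt (fun x : ℝ => lam / 2 * x ^ 2) (lam / 2 * (2 * u ^ 1)) u :=
        (hasDerivAt_pow 2 u).const_mul (lam / 2)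
      have := (hf u hu).sub h2
      exact this.congr_deriv (by ring)
    have hmonoφ : MonotoneOn φ (Set.Ici (1 : ℝ)) := by
      apply monotoneOn_of_deriv_nonneg (convex_Ici 1)
      · intro x hx
        have hx1 : (1:ℝ) ≤ x := hx
        exact (hφd x (by linarith)).differentiableAt.continuousAt.continuousWithinAt
      · intro x hx
        rw [interior_Ici] at hx
        exact ((hφd x (by linarith [Set.mem_Ioi.mp hx])).differentiableAt).differentiableWithinAt
      · intro x hx
        rw [interior_Ici] at hx
        have hx1 : (1 : ℝ) < x := hx
        have hx0 : (0 : ℝ) < x := by linarith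
        rw [(hφd x hx0).deriv]
        have := hlow x hx0
        have : lam * x ≤ f x := by
          have hxx : lam * x ^ 2 ≤ x * f x := hlow x hx0
          nlinarith
        linarith
    -- Take u large to get a contradiction
    set C : ℝ := (b + lam / 2 - F 1) / (lam / 2 - a) with hC
    set u : ℝ := max 2 (C + 1) with hu
    have hu2 : (2 : ℝ) ≤ u := le_max_left _ _
    have huC : C + 1 ≤ u := le_max_right _ _
    have hu1 : (1 : ℝ) < u := by linarith
    have hu0 : (0 : ℝ) < u := by linarith
    have hφle : φ 1 ≤ φ u := hmonoφ (Set.mem_Ici.mpr le_rfl) (Set.mem_Ici.mpr hu1.le) hu1.le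
    have hFu : F u ≤ a * u ^ 2 + b := by
      rw [hFrep u hu0]
      have h1 : h u ≤ 0 := hcon u hu1
      have h2 : (0 : ℝ) ≤ u ^ (2 + ε) := Real.rpow_nonneg hu0.le _
      nlinarith
    have huu : C < u ^ 2 := by nlinarith
    have hCa : (0 : ℝ) < lam / 2 - a := by linarith
    rw [hC] at huu
    have hlt : b + lam / 2 - F 1 < (lam / 2 - a) * u ^ 2 := by
      have := (div_lt_iff₀ hCa).mp huu
      nlinarith
    simp only [hφdef] at hφle
    nlinarith
  obtain ⟨u₀, hu₀1, hc⟩ := key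
  refine ⟨u₀, hu₀1, (2 + ε) * h u₀, by positivity, ?_⟩
  intro u hu
  have hu0 : (0 : ℝ) < u := by linarith
  have hu₀0 : (0 : ℝ) < u₀ := by linarith
  -- comparison function G with slope of F
  set G : ℝ → ℝ := fun v => h u * v ^ (2 + ε) + a * v ^ 2 + b with hG
  have hGd : HasDerivAt G ((2 + ε) * h u * u ^ (1 + ε) + 2 * a * u) u := by
    have h1 : HasDerivAt (fun v : ℝ => v ^ (2 + ε)) ((2 + ε) * u ^ (2 + ε - 1)) u :=
      Real.hasDerivAt_rpow_const (Or.inl hu0.ne')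
    have h2 : HasDerivAt (fun v : ℝ => a * v ^ 2) (a * (2 * u ^ 1)) u :=
      (hasDerivAt_pow 2 u).const_mul a
    have := ((h1.const_mul (h u)).add h2).add_const b
    have he : (2 : ℝ) + ε - 1 = 1 + ε := by ring
    rw [he] at this
    simpa [hG] using this.congr_deriv (by ring)
  set d : ℝ := f u - ((2 + ε) * h u * u ^ (1 + ε) + 2 * a * u) with hd
  have hψd : HasDerivAt (fun v => F v - G v) d u := (hf u hu0).sub hGd
  -- F - G vanishes at u and is nonnegative to the right of u
  have hψu : F u - G u = 0 := by
    rw [hFrep u hu0, hG]; ring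
  have hψnn : ∀ v : ℝ, u < v → 0 ≤ F v - G v := by
    intro v hv
    have hv0 : (0 : ℝ) < v := lt_trans hu0 hv
    have h1 : h u ≤ h v := hmono u v hu0 hv.le
    have h2 : (0 : ℝ) ≤ v ^ (2 + ε) := Real.rpow_nonneg hv0.le _
    have heq : F v - G v = v ^ (2 + ε) * (h v - h u) := by
      rw [hFrep v hv0]; simp only [hG]; ring
    rw [heq]
    exact mul_nonneg h2 (sub_nonneg.mpr h1)
  -- slope argument: d ≥ 0
  have hdnn : 0 ≤ d := by
    have htend : Filter.Tendsto (slope (fun v => F v - G v) u) (nhdsWithin u (Set.Ioi u)) (nhds d) :=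
      (hasDerivAt_iff_tendsto_slope.mp hψd).mono_left
        (nhdsWithin_mono u (fun v hv => ne_of_gt (Set.mem_Ioi.mp hv)))
    refine ge_of_tendsto htend ?_
    filter_upwards [self_mem_nhdsWithin] with v hv
    have hv' : u < v := Set.mem_Ioi.mp hv
    rw [slope_def_field]
    apply div_nonneg
    · rw [hψu, sub_zero]; exact hψnn v hv'
    · linarith
  -- conclude
  have hfl : (2 + ε) * h u * u ^ (1 + ε) + 2 * a * u ≤ f u := by
    have := hdnn; rw [hd] at this; linarith
  have hsplit : u ^ ((2 : ℝ) + ε) = u * u ^ ((1 : ℝ) + ε) := by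
    rw [show (2 : ℝ) + ε = 1 + (1 + ε) by ring, Real.rpow_add hu0, Real.rpow_one]
  have hhu : h u₀ ≤ h u := hmono u₀ u hu₀0 hu
  have hrnn : (0 : ℝ) ≤ u ^ ((1 : ℝ) + ε) := Real.rpow_nonneg hu0.le _
  calc (2 + ε) * h u₀ * u ^ (2 + ε) ≤ (2 + ε) * h u * u ^ (2 + ε) := by
        apply mul_le_mul_of_nonneg_right _ (Real.rpow_nonneg hu0.le _)
        exact mul_le_mul_of_nonneg_left hhu (by linarith)
    _ = u * ((2 + ε) * h u * u ^ (1 + ε)) := by rw [hsplit]; ring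
    _ ≤ u * ((2 + ε) * h u * u ^ (1 + ε) + 2 * a * u) :=
        mul_le_mul_of_nonneg_left (by nlinarith) hu0.le
    _ ≤ u * f u := mul_le_mul_of_nonneg_left hfl hu0.le
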